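/- arXiv:1301.5635 — 2 statements merged into one kernel-verified Lean document; each statement's English description precedes it below -/
import Mathlib

section
/- For every x > 0 and every ν > 1/2, M_ν(x)² ≤ M_{ν-1}(x) · M_{ν+1}(x), where M_ν(x) = (2/√π) ∫₀¹ (1-t²)^(ν-1/2) e^(-xt) dt. -/
open Real MeasureTheory intervalIntegral

noncomputable def strM (ν x : ℝ) : ℝ :=
  2 / Real.sqrt Real.pi * ∫ t in (0:ℝ)..1, (1 - t ^ 2) ^ (ν - 1 / 2) * Real.exp (-x * t)

lemma strM_meas (p x : ℝ) :
    Measurable fun t : ℝ => (1 - t ^ 2) ^ p * Real.exp (-x * t) := by fun_prop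

lemma strM_integrableOn_Ioo (p x : ℝ) (hp : -1 < p) (hx : 0 < x) :
    IntegrableOn (fun t : ℝ => (1 - t ^ 2) ^ p * Real.exp (-x * t)) (Set.Ioo (0:ℝ) 1) := by
  rcases le_or_gt 0 p with h0 | h0
  · have hconst : IntegrableOn (fun _ : ℝ => (1:ℝ)) (Set.Ioo (0:ℝ) 1) :=
      integrableOn_const (by simp)
    refine hconst.mono' (strM_meas p x).aestronglyMeasurable ?_
    filter_upwards [ae_restrict_mem measurableSet_Ioo] with t ht
    have hu : (0:ℝ) ≤ 1 - t ^ 2 := by nlinarith [ht.1, ht.2]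
    have h1 : (1 - t ^ 2) ^ p ≤ 1 := Real.rpow_le_one hu (by nlinarith [ht.1]) h0
    have h2 : Real.exp (-x * t) ≤ 1 := Real.exp_le_one_iff.2 (by nlinarith [ht.1])
    rw [Real.norm_eq_abs, abs_of_nonneg (mul_nonneg (Real.rpow_nonneg hu p) (Real.exp_pos _).le)]
    calc (1 - t ^ 2) ^ p * Real.exp (-x * t) ≤ 1 * 1 :=
          mul_le_mul h1 h2 (Real.exp_pos _).le zero_le_one
      _ = 1 := by ring
  · have h1 : IntervalIntegrable (fun s : ℝ => s ^ p) volume 0 1 := intervalIntegrable_rpow' hp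
    have h2 := (h1.comp_sub_left 1).symm
    have h3 : IntegrableOn (fun t : ℝ => (1 - t) ^ p) (Set.Ioo (0:ℝ) 1) := by
      have := (intervalIntegrable_iff_integrableOn_Ioc_of_le (by norm_num : (1:ℝ) - 1 ≤ 1 - 0)).1 h2
      simpa using this.mono_set Set.Ioo_subset_Ioc_self
    refine h3.mono' (strM_meas p x).aestronglyMeasurable ?_
    filter_upwards [ae_restrict_mem measurableSet_Ioo] with t ht
    have hu : (0:ℝ) ≤ 1 - t ^ 2 := by nlinarith [ht.1, ht.2]
    have h1t : (0:ℝ) < 1 - t := by linarith [ht.2]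
    have hle : 1 - t ≤ 1 - t ^ 2 := by nlinarith [ht.1, ht.2]
    have h4 : (1 - t ^ 2) ^ p ≤ (1 - t) ^ p :=
      Real.rpow_le_rpow_of_nonpos h1t hle h0.le
    have h5 : Real.exp (-x * t) ≤ 1 := Real.exp_le_one_iff.2 (by nlinarith [ht.1])
    rw [Real.norm_eq_abs, abs_of_nonneg (mul_nonneg (Real.rpow_nonneg hu p) (Real.exp_pos _).le)]
    calc (1 - t ^ 2) ^ p * Real.exp (-x * t) ≤ (1 - t) ^ p * 1 :=
          mul_le_mul h4 h5 (Real.exp_pos _).le (Real.rpow_nonneg h1t.le p)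
      _ = (1 - t) ^ p := by ring

lemma strM_integrableOn_Ioc (p x : ℝ) (hp : -1 < p) (hx : 0 < x) :
    IntegrableOn (fun t : ℝ => (1 - t ^ 2) ^ p * Real.exp (-x * t)) (Set.Ioc (0:ℝ) 1) :=
  (integrableOn_Ioc_iff_integrableOn_Ioo enorm_ne_top).2 (strM_integrableOn_Ioo p x hp hx)

lemma strM_key (ν x : ℝ) (hν : 1 / 2 < ν) (hx : 0 < x) :
    (∫ t in Set.Ioc (0:ℝ) 1, (1 - t ^ 2) ^ (ν - 1 / 2) * Real.exp (-x * t)) ^ 2 ≤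
      (∫ t in Set.Ioc (0:ℝ) 1, (1 - t ^ 2) ^ (ν - 1 - 1 / 2) * Real.exp (-x * t)) *
        ∫ t in Set.Ioc (0:ℝ) 1, (1 - t ^ 2) ^ (ν + 1 - 1 / 2) * Real.exp (-x * t) := by
  set μ : Measure ℝ := volume.restrict (Set.Ioc (0:ℝ) 1) with hμ
  set a : ℝ := ν / 2 - 3 / 4 with ha
  set b : ℝ := ν / 2 + 1 / 4 with hb
  set f : ℝ → ℝ := fun t => (1 - t ^ 2) ^ a * Real.exp (-x * t / 2) with hf
  set g : ℝ → ℝ := fun t => (1 - t ^ 2) ^ b * Real.exp (-x * t / 2) with hg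
  have hfm : Measurable f := by rw [hf]; fun_prop
  have hgm : Measurable g := by rw [hg]; fun_prop
  -- pointwise identities on Ioc
  have hmem : ∀ᵐ t ∂μ, t ∈ Set.Ioc (0:ℝ) 1 := ae_restrict_mem measurableSet_Ioc
  have hfg : ∀ᵐ t ∂μ, f t * g t = (1 - t ^ 2) ^ (ν - 1 / 2) * Real.exp (-x * t) := by
    filter_upwards [hmem] with t ht
    have hu : (0:ℝ) ≤ 1 - t ^ 2 := by nlinarith [ht.1, ht.2]
    have hab : a + b ≠ 0 := by rw [ha, hb]; intro h; nlinarith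
    calc f t * g t
        = ((1 - t ^ 2) ^ a * (1 - t ^ 2) ^ b) *
            (Real.exp (-x * t / 2) * Real.exp (-x * t / 2)) := by rw [hf, hg]; ring
      _ = (1 - t ^ 2) ^ (a + b) * Real.exp (-x * t / 2 + -x * t / 2) := by
            rw [← Real.rpow_add' hu hab, ← Real.exp_add]
      _ = (1 - t ^ 2) ^ (ν - 1 / 2) * Real.exp (-x * t) := by
            rw [show a + b = ν - 1 / 2 by rw [ha, hb]; ring,
              show -x * t / 2 + -x * t / 2 = -x * t by ring]
  have hfsq : ∀ᵐ t ∂μ, f t ^ 2 = (1 - t ^ 2) ^ (ν - 1 - 1 / 2) * Real.exp (-x * t) := by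
    filter_upwards [hmem] with t ht
    have hu : (0:ℝ) ≤ 1 - t ^ 2 := by nlinarith [ht.1, ht.2]
    have h2 : ((1 - t ^ 2) ^ a) ^ 2 = (1 - t ^ 2) ^ (a * 2) := by
      rw [← Real.rpow_two, ← Real.rpow_mul hu]; try norm_num
    calc f t ^ 2 = ((1 - t ^ 2) ^ a) ^ 2 * Real.exp (-x * t / 2) ^ 2 := by rw [hf, mul_pow]
      _ = (1 - t ^ 2) ^ (a * 2) * Real.exp (-x * t / 2 + -x * t / 2) := by
            rw [h2, Real.exp_add]; try ring
      _ = (1 - t ^ 2) ^ (ν - 1 - 1 / 2) * Real.exp (-x * t) := by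
            rw [show a * 2 = ν - 1 - 1 / 2 by rw [ha]; ring,
              show -x * t / 2 + -x * t / 2 = -x * t by ring]
  have hgsq : ∀ᵐ t ∂μ, g t ^ 2 = (1 - t ^ 2) ^ (ν + 1 - 1 / 2) * Real.exp (-x * t) := by
    filter_upwards [hmem] with t ht
    have hu : (0:ℝ) ≤ 1 - t ^ 2 := by nlinarith [ht.1, ht.2]
    have h2 : ((1 - t ^ 2) ^ b) ^ 2 = (1 - t ^ 2) ^ (b * 2) := by
      rw [← Real.rpow_two, ← Real.rpow_mul hu]; try norm_num
    calc g t ^ 2 = ((1 - t ^ 2) ^ b) ^ 2 * Real.exp (-x * t / 2) ^ 2 := by rw [hg, mul_pow]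
      _ = (1 - t ^ 2) ^ (b * 2) * Real.exp (-x * t / 2 + -x * t / 2) := by
            rw [h2, Real.exp_add]; try ring
      _ = (1 - t ^ 2) ^ (ν + 1 - 1 / 2) * Real.exp (-x * t) := by
            rw [show b * 2 = ν + 1 - 1 / 2 by rw [hb]; ring,
              show -x * t / 2 + -x * t / 2 = -x * t by ring]
  -- Memℒp
  have hf2 : Integrable (fun t => f t ^ 2) μ :=
    (strM_integrableOn_Ioc (ν - 1 - 1 / 2) x (by linarith) hx).congr (hfsq.mono fun t ht => ht.symm)
  have hg2 : Integrable (fun t => g t ^ 2) μ :=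
    (strM_integrableOn_Ioc (ν + 1 - 1 / 2) x (by linarith) hx).congr (hgsq.mono fun t ht => ht.symm)
  have hfL2 : MemLp f 2 μ := (memLp_two_iff_integrable_sq hfm.aestronglyMeasurable).2 hf2
  have hgL2 : MemLp g 2 μ := (memLp_two_iff_integrable_sq hgm.aestronglyMeasurable).2 hg2
  have hpq : Real.HolderConjugate 2 2 := ⟨by norm_num, by norm_num, by norm_num⟩
  have hofReal : (ENNReal.ofReal (2:ℝ)) = 2 := by
    rw [show (2:ℝ) = ((2:ℕ):ℝ) by norm_num, ENNReal.ofReal_natCast]; norm_num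
  have hfnn : 0 ≤ᵐ[μ] f := by
    filter_upwards [hmem] with t ht
    exact mul_nonneg (Real.rpow_nonneg (by nlinarith [ht.1, ht.2]) a) (Real.exp_pos _).le
  have hgnn : 0 ≤ᵐ[μ] g := by
    filter_upwards [hmem] with t ht
    exact mul_nonneg (Real.rpow_nonneg (by nlinarith [ht.1, ht.2]) b) (Real.exp_pos _).le
  have hCS := integral_mul_le_Lp_mul_Lq_of_nonneg hpq hfnn hgnn
    (by rwa [hofReal]) (by rwa [hofReal])
  -- rewrite rpow-2 as pow-2 in the RHS of hCS
  have hrw2 : ∀ h : ℝ → ℝ, (∫ t, h t ^ (2:ℝ) ∂μ) = ∫ t, h t ^ (2:ℕ) ∂μ := by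
    intro h
    refine integral_congr_ae (Filter.Eventually.of_forall fun t => ?_)
    exact Real.rpow_two _
  rw [hrw2 f, hrw2 g] at hCS
  set A : ℝ := ∫ t, f t ^ 2 ∂μ with hA
  set B : ℝ := ∫ t, g t ^ 2 ∂μ with hB
  have hAnn : 0 ≤ A := integral_nonneg fun t => sq_nonneg _
  have hBnn : 0 ≤ B := integral_nonneg fun t => sq_nonneg _
  have hInn : 0 ≤ ∫ t, f t * g t ∂μ := by
    refine integral_nonneg_of_ae ?_
    filter_upwards [hfnn, hgnn] with t h1 h2
    exact mul_nonneg h1 h2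
  have hsq : (∫ t, f t * g t ∂μ) ^ 2 ≤ A * B := by
    have h1 := pow_le_pow_left₀ hInn hCS 2
    have h2 : (A ^ ((1:ℝ) / 2)) ^ 2 = A := by
      rw [← Real.rpow_two, ← Real.rpow_mul hAnn]; norm_num
    have h3 : (B ^ ((1:ℝ) / 2)) ^ 2 = B := by
      rw [← Real.rpow_two, ← Real.rpow_mul hBnn]; norm_num
    calc (∫ t, f t * g t ∂μ) ^ 2 ≤ (A ^ ((1:ℝ)/2) * B ^ ((1:ℝ)/2)) ^ 2 := h1
      _ = (A ^ ((1:ℝ)/2)) ^ 2 * (B ^ ((1:ℝ)/2)) ^ 2 := by rw [mul_pow]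
      _ = A * B := by rw [h2, h3]
  have e1 : (∫ t in Set.Ioc (0:ℝ) 1, (1 - t ^ 2) ^ (ν - 1 / 2) * Real.exp (-x * t)) =
      ∫ t, f t * g t ∂μ := integral_congr_ae (hfg.mono fun t ht => ht.symm)
  have e2 : (∫ t in Set.Ioc (0:ℝ) 1, (1 - t ^ 2) ^ (ν - 1 - 1 / 2) * Real.exp (-x * t)) = A :=
    integral_congr_ae (hfsq.mono fun t ht => ht.symm)
  have e3 : (∫ t in Set.Ioc (0:ℝ) 1, (1 - t ^ 2) ^ (ν + 1 - 1 / 2) * Real.exp (-x * t)) = B :=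
    integral_congr_ae (hgsq.mono fun t ht => ht.symm)
  rw [e1, e2, e3]
  exact hsq

theorem strM_turan (ν x : ℝ) (hν : 1 / 2 < ν) (hx : 0 < x) :
    strM ν x ^ 2 ≤ strM (ν - 1) x * strM (ν + 1) x := by
  unfold strM
  rw [intervalIntegral.integral_of_le zero_le_one,
    intervalIntegral.integral_of_le zero_le_one, intervalIntegral.integral_of_le zero_le_one]
  set c : ℝ := 2 / Real.sqrt Real.pi with hc
  have hkey := strM_key ν x hν hx
  calc (c * ∫ t in Set.Ioc (0:ℝ) 1, (1 - t ^ 2) ^ (ν - 1 / 2) * Real.exp (-x * t)) ^ 2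
      = c ^ 2 * (∫ t in Set.Ioc (0:ℝ) 1, (1 - t ^ 2) ^ (ν - 1 / 2) * Real.exp (-x * t)) ^ 2 := by
        ring
    _ ≤ c ^ 2 * ((∫ t in Set.Ioc (0:ℝ) 1, (1 - t ^ 2) ^ (ν - 1 - 1 / 2) * Real.exp (-x * t)) *
          ∫ t in Set.Ioc (0:ℝ) 1, (1 - t ^ 2) ^ (ν + 1 - 1 / 2) * Real.exp (-x * t)) :=
        mul_le_mul_of_nonneg_left hkey (sq_nonneg c)
    _ = (c * ∫ t in Set.Ioc (0:ℝ) 1, (1 - t ^ 2) ^ (ν - 1 - 1 / 2) * Real.exp (-x * t)) *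
          (c * ∫ t in Set.Ioc (0:ℝ) 1, (1 - t ^ 2) ^ (ν + 1 - 1 / 2) * Real.exp (-x * t)) := by
        ring
end

section
/- For all ν > -1/2 and x > 0, M_ν(x) ≤ Γ(ν+1/2)/Γ(ν+1) - (1 - e^(-x))/(√π (ν+1/2)), where M_ν(x) = (2/√π) ∫₀¹ (1-t²)^(ν-1/2) e^(-xt) dt. -/
open Real MeasureTheory intervalIntegral
open Set

-- substitution machinery
lemma himg : (fun t : ℝ => t ^ 2) '' Ioo 0 1 = Ioo (0:ℝ) 1 := by
  ext y
  constructor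
  · rintro ⟨t, ⟨h0, h1⟩, rfl⟩
    exact ⟨by positivity, by simp only []; nlinarith⟩
  · rintro ⟨h0, h1⟩
    refine ⟨Real.sqrt y, ⟨Real.sqrt_pos.2 h0, ?_⟩, Real.sq_sqrt h0.le⟩
    have := Real.sqrt_lt_sqrt h0.le h1
    rwa [Real.sqrt_one] at this

lemma subst_sq (g : ℝ → ℝ) :
    ∫ x in Ioo (0:ℝ) 1, g x = ∫ t in Ioo (0:ℝ) 1, 2 * t * g (t ^ 2) := by
  have hd : ∀ t ∈ Ioo (0:ℝ) 1, HasDerivWithinAt (fun t : ℝ => t ^ 2) (2 * t) (Ioo 0 1) t := by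
    intro t _
    simpa using (hasDerivAt_pow 2 t).hasDerivWithinAt
  have hinj : InjOn (fun t : ℝ => t ^ 2) (Ioo 0 1) := by
    intro a ha b hb h
    simp only at h
    nlinarith [ha.1, hb.1]
  have := integral_image_eq_integral_abs_deriv_smul measurableSet_Ioo hd hinj g
  rw [himg] at this
  rw [this]
  refine setIntegral_congr_fun measurableSet_Ioo fun t ht => ?_
  rw [abs_of_pos (by linarith [ht.1] : (0:ℝ) < 2 * t)]
  simp [smul_eq_mul]

lemma intInt_one_sub_rpow {p : ℝ} (hp : -1 < p) :
    IntervalIntegrable (fun t : ℝ => (1 - t) ^ p) volume 0 1 := by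
  have h := (intervalIntegral.intervalIntegrable_rpow' (a := 0) (b := 1) hp)
  have := h.comp_sub_left 1
  simpa using this.symm

lemma intInt_g {p : ℝ} (hp : -1 < p) :
    IntervalIntegrable (fun t : ℝ => (1 - t ^ 2) ^ p) volume 0 1 := by
  have h := (intInt_one_sub_rpow hp).mul_continuousOn (g := fun t => (1 + t) ^ p)
    (by
      apply ContinuousOn.rpow_const (by fun_prop)
      intro t ht
      rw [uIcc_of_le (by norm_num)] at ht
      left; linarith [ht.1])
  rw [intervalIntegrable_iff_integrableOn_Icc_of_le (by norm_num)] at h ⊢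
  refine h.congr_fun (fun t ht => ?_) measurableSet_Icc
  show (1 - t) ^ p * (1 + t) ^ p = (1 - t ^ 2) ^ p
  rw [← Real.mul_rpow (by linarith [ht.2]) (by linarith [ht.1])]
  ring_nf

lemma ioo_eq_interval (f : ℝ → ℝ) :
    ∫ t in Ioo (0:ℝ) 1, f t = ∫ t in (0:ℝ)..1, f t := by
  rw [intervalIntegral.integral_of_le (by norm_num), MeasureTheory.integral_Ioc_eq_integral_Ioo]

lemma I1 {p : ℝ} (hp : -1 < p) :
    ∫ t in (0:ℝ)..1, t * (1 - t ^ 2) ^ p = 1 / (2 * (p + 1)) := by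
  have key := subst_sq (fun x => (1 - x) ^ p)
  have hval : ∫ x in (0:ℝ)..1, (1 - x) ^ p = 1 / (p + 1) := by
    have := intervalIntegral.integral_comp_sub_left (a := 0) (b := 1)
      (fun x : ℝ => x ^ p) 1
    simp only [sub_zero, sub_self] at this
    rw [this, integral_rpow (Or.inl hp), Real.one_rpow,
      Real.zero_rpow (by linarith), sub_zero, one_div]
  rw [ioo_eq_interval, ioo_eq_interval, hval] at key
  have : ∫ t in (0:ℝ)..1, 2 * t * (1 - t ^ 2) ^ p
      = 2 * ∫ t in (0:ℝ)..1, t * (1 - t ^ 2) ^ p := by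
    rw [← intervalIntegral.integral_const_mul]
    congr 1; ext t; ring
  rw [this] at key
  have hne : p + 1 ≠ 0 := by linarith
  rw [eq_div_iff (by positivity : (2:ℝ) * (p+1) ≠ 0)]
  rw [div_eq_iff hne] at key
  linarith

lemma Jval {ν : ℝ} (hν : -1 / 2 < ν) :
    Real.Gamma (ν + 1) * ∫ x in (0:ℝ)..1, x ^ (-(1/2) : ℝ) * (1 - x) ^ (ν - 1/2)
      = Real.sqrt Real.pi * Real.Gamma (ν + 1/2) := by
  have h := Complex.Gamma_mul_Gamma_eq_betaIntegral
    (s := (1/2 : ℂ)) (t := (ν : ℂ) + 1/2) (by norm_num)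
    (by simp [Complex.add_re]; linarith)
  rw [Complex.betaIntegral] at h
  have hcongr : ∀ x ∈ uIcc (0:ℝ) 1,
      (x : ℂ) ^ ((1/2 : ℂ) - 1) * ((1:ℂ) - x) ^ ((ν : ℂ) + 1/2 - 1)
        = ((x ^ (-(1/2) : ℝ) * (1 - x) ^ (ν - 1/2) : ℝ) : ℂ) := by
    intro x hx
    rw [uIcc_of_le (by norm_num)] at hx
    have hx1 : (0:ℝ) ≤ 1 - x := by linarith [hx.2]
    rw [Complex.ofReal_mul, Complex.ofReal_cpow hx.1, Complex.ofReal_cpow hx1]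
    push_cast
    rw [show ((1:ℂ))/2 - 1 = -(1/2) by norm_num,
      show (ν:ℂ) + 1/2 - 1 = ν - 1/2 by ring]
  rw [intervalIntegral.integral_congr hcongr, intervalIntegral.integral_ofReal] at h
  have hnu12 : (ν : ℂ) + 1/2 = ((ν + 1/2 : ℝ) : ℂ) := by push_cast; ring
  have h12 : (1/2 : ℂ) = ((1/2 : ℝ) : ℂ) := by norm_num
  have hnu1 : ((1/2 : ℝ) : ℂ) + ((ν + 1/2 : ℝ) : ℂ) = ((ν + 1 : ℝ) : ℂ) := by push_cast; ring
  rw [hnu12, h12, hnu1, Complex.Gamma_ofReal, Complex.Gamma_ofReal, Complex.Gamma_ofReal] at h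
  rw [← Complex.ofReal_mul, ← Complex.ofReal_mul, Complex.ofReal_inj] at h
  rw [Real.Gamma_one_half_eq] at h
  linarith [h]

lemma I0 {ν : ℝ} (hν : -1 / 2 < ν) :
    ∫ t in (0:ℝ)..1, (1 - t ^ 2) ^ (ν - 1/2)
      = Real.sqrt Real.pi / 2 * (Real.Gamma (ν + 1/2) / Real.Gamma (ν + 1)) := by
  have key := subst_sq (fun x => x ^ (-(1/2) : ℝ) * (1 - x) ^ (ν - 1/2))
  have hcongr : ∫ t in Ioo (0:ℝ) 1,
      2 * t * ((t ^ 2) ^ (-(1/2) : ℝ) * (1 - t ^ 2) ^ (ν - 1/2))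
        = ∫ t in Ioo (0:ℝ) 1, 2 * (1 - t ^ 2) ^ (ν - 1/2) := by
    refine setIntegral_congr_fun measurableSet_Ioo fun t ht => ?_
    have ht0 : (0:ℝ) < t := ht.1
    rw [← Real.rpow_natCast t 2, ← Real.rpow_mul ht0.le]
    norm_num
    rw [Real.rpow_neg_one]
    field_simp
  rw [hcongr, ioo_eq_interval, ioo_eq_interval, intervalIntegral.integral_const_mul] at key
  have hJ := Jval hν
  rw [key] at hJ
  have hG : 0 < Real.Gamma (ν + 1) := Real.Gamma_pos_of_pos (by linarith)
  have heq : ∫ t in (0:ℝ)..1, (1 - t ^ 2) ^ (ν - 1/2)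
      = (Real.sqrt Real.pi * Real.Gamma (ν + 1/2)) / (2 * Real.Gamma (ν + 1)) := by
    rw [eq_div_iff (by positivity)]
    linarith [hJ]
  rw [heq]
  field_simp

theorem strM_upper_bound (ν x : ℝ) (hν : -1 / 2 < ν) (hx : 0 < x) :
    strM ν x ≤ Real.Gamma (ν + 1 / 2) / Real.Gamma (ν + 1) -
      (1 - Real.exp (-x)) / (Real.sqrt Real.pi * (ν + 1 / 2)) := by
  have hp : -1 < ν - 1/2 := by linarith
  have hg : IntervalIntegrable (fun t : ℝ => (1 - t ^ 2) ^ (ν - 1/2)) volume 0 1 := intInt_g hp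
  set c := 1 - Real.exp (-x) with hc
  -- pointwise bound from convexity of exp
  have hpt : ∀ t ∈ Icc (0:ℝ) 1,
      (1 - t ^ 2) ^ (ν - 1/2) * Real.exp (-x * t)
        ≤ (1 - t ^ 2) ^ (ν - 1/2) * (1 - t * c) := by
    intro t ht
    have hbase : 0 ≤ 1 - t ^ 2 := by nlinarith [ht.1, ht.2]
    refine mul_le_mul_of_nonneg_left ?_ (Real.rpow_nonneg hbase _)
    have hconv := convexOn_exp.2 (Set.mem_univ (0:ℝ)) (Set.mem_univ (-x))
      (by linarith [ht.2] : (0:ℝ) ≤ 1 - t) ht.1 (by ring)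
    simp only [smul_eq_mul, mul_zero, zero_add, Real.exp_zero, mul_one] at hconv
    calc Real.exp (-x * t) = Real.exp (t * -x) := by ring_nf
      _ ≤ 1 - t + t * Real.exp (-x) := hconv
      _ = 1 - t * c := by rw [hc]; ring
  have hint2 : IntervalIntegrable
      (fun t : ℝ => (1 - t ^ 2) ^ (ν - 1/2) * Real.exp (-x * t)) volume 0 1 :=
    hg.mul_continuousOn (by fun_prop)
  have hint3 : IntervalIntegrable
      (fun t : ℝ => (1 - t ^ 2) ^ (ν - 1/2) * (1 - t * c)) volume 0 1 :=
    hg.mul_continuousOn (by fun_prop)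
  have htg : IntervalIntegrable (fun t : ℝ => c * (t * (1 - t ^ 2) ^ (ν - 1/2))) volume 0 1 :=
    ((hg.continuousOn_mul (by fun_prop)).const_mul c)
  have hmono := intervalIntegral.integral_mono_on (by norm_num) hint2 hint3 hpt
  have hsplit : ∫ t in (0:ℝ)..1, (1 - t ^ 2) ^ (ν - 1/2) * (1 - t * c)
      = (∫ t in (0:ℝ)..1, (1 - t ^ 2) ^ (ν - 1/2))
        - c * ∫ t in (0:ℝ)..1, t * (1 - t ^ 2) ^ (ν - 1/2) := by
    rw [← intervalIntegral.integral_const_mul, ← intervalIntegral.integral_sub hg htg]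
    congr 1; ext t; ring
  rw [hsplit, I0 hν, I1 hp] at hmono
  have hπ : 0 < Real.sqrt Real.pi := Real.sqrt_pos.2 Real.pi_pos
  have h2ν : (0:ℝ) < ν + 1/2 := by linarith
  have hfac : (0:ℝ) ≤ 2 / Real.sqrt Real.pi := by positivity
  have := mul_le_mul_of_nonneg_left hmono hfac
  rw [strM]
  refine le_trans this (le_of_eq ?_)
  have hrw : ν - 1/2 + 1 = ν + 1/2 := by ring
  rw [hrw, mul_sub]
  congr 1
  · rw [← mul_assoc, div_mul_div_comm, mul_comm (2:ℝ) (Real.sqrt Real.pi),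
      div_self (by positivity), one_mul]
  · have h1 : (ν + 1/2) ≠ 0 := ne_of_gt h2ν
    field_simp [hπ.ne', h1]
end
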